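/- Normalized divergence formula for trees: For two leaf distributions P_L and P_{L'} on the same tree with full support, D(P_L ‖ P_{L'})/E[w(L)] = Σ_{j∈B} P_B(j) · D(P_{S_j} ‖ P_{S'_j}), where P_B(j) = Q_j/E[w(L)] and E[w(L)] is the expected leaf depth under P_L. -/

import Mathlib

/-- A finite rooted tree with data of type `α` at the leaves. -/
inductive PTree (α : Type) : Type where
  | leaf (a : α) : PTree α
  | node (n : ℕ) (children : Fin n → PTree α) : PTree α

namespace PTree

/-- Node probability `Q_j`: sum of the probabilities of the leaves below the node. -/
def Q {α : Type} (pr : α → ℝ) : PTree α → ℝ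
  | .leaf a => pr a
  | .node n c => ∑ k : Fin n, Q pr (c k)

/-- All leaf probabilities are positive and every branching node has at least one
successor (so all node probabilities `Q_j` are positive). -/
def pos {α : Type} (pr : α → ℝ) : PTree α → Prop
  | .leaf a => 0 < pr a
  | .node n c => 0 < n ∧ ∀ k : Fin n, pos pr (c k)

/-- Expected value `E[f(L)]` over the leaves; nodes are identified by their
address (list of child indices from the root). -/
def leafExp {α : Type} (pr : α → ℝ) (f : List ℕ → ℝ) : PTree α → List ℕ → ℝ
  | .leaf a, addr => pr a * f addr
  | .node n c, addr => ∑ k : Fin n, leafExp pr f (c k) (addr ++ [k.val])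

/-- Informational divergence of the leaf distributions:
`D(P_L ‖ P_{L'}) = Σ_i P_L(i) log₂ (P_L(i)/P_{L'}(i))`. -/
noncomputable def leafDiv {α : Type} (p q : α → ℝ) : PTree α → ℝ
  | .leaf a => p a * Real.logb 2 (p a / q a)
  | .node n c => ∑ k : Fin n, leafDiv p q (c k)

/-- `Σ_{j∈B} P_B(j) · D(P_{S_j} ‖ P_{S'_j})` with `P_B(j) = Q_j / W`. -/
noncomputable def branchDivNorm {α : Type} (p q : α → ℝ) (W : ℝ) : PTree α → ℝ
  | .leaf _ => 0
  | .node n c =>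
      (Q p (.node n c) / W) *
        (∑ k : Fin n, (Q p (c k) / Q p (.node n c)) *
          Real.logb 2 ((Q p (c k) / Q p (.node n c)) / (Q q (c k) / Q q (.node n c))))
      + ∑ k : Fin n, branchDivNorm p q W (c k)

lemma Q_pos {α : Type} (pr : α → ℝ) (t : PTree α) (h : pos pr t) : 0 < Q pr t := by
  induction t with
  | leaf a => exact h
  | node n c ih =>
    obtain ⟨hn, hc⟩ := h
    haveI : Nonempty (Fin n) := Fin.pos_iff_nonempty.mp hn
    exact Finset.sum_pos (fun k _ => ih k (hc k)) Finset.univ_nonempty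

lemma branchDivNorm_div {α : Type} (p q : α → ℝ) (W : ℝ) (hW : W ≠ 0) (t : PTree α) :
    branchDivNorm p q W t = branchDivNorm p q 1 t / W := by
  induction t with
  | leaf a => simp [branchDivNorm]
  | node n c ih =>
    simp only [branchDivNorm]
    rw [Finset.sum_congr rfl (fun k _ => ih k), ← Finset.sum_div]
    field_simp
    simp only [mul_comm (Q q (node n c))]

lemma key_eq {α : Type} (p q : α → ℝ) (t : PTree α) (hp : pos p t) (hq : pos q t) :
    leafDiv p q t
      = Q p t * Real.logb 2 (Q p t / Q q t) + branchDivNorm p q 1 t := by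
  induction t with
  | leaf a => simp [leafDiv, branchDivNorm, Q]
  | node n c ih =>
    obtain ⟨hn, hcp⟩ := hp
    obtain ⟨_, hcq⟩ := hq
    have hA : ∀ k : Fin n, 0 < Q p (c k) := fun k => Q_pos p (c k) (hcp k)
    have hB : ∀ k : Fin n, 0 < Q q (c k) := fun k => Q_pos q (c k) (hcq k)
    have hSA : 0 < Q p (.node n c) := Q_pos p _ ⟨hn, hcp⟩
    have hSB : 0 < Q q (.node n c) := Q_pos q _ ⟨hn, hcq⟩
    simp only [leafDiv, branchDivNorm]
    rw [Finset.sum_congr rfl (fun k _ => ih k (hcp k) (hcq k)), Finset.sum_add_distrib]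
    have hterm : ∀ k : Fin n,
        (Q p (c k) / Q p (.node n c)) *
          Real.logb 2 ((Q p (c k) / Q p (.node n c)) / (Q q (c k) / Q q (.node n c)))
        = (Q p (c k) / Q p (.node n c)) *
            ((Real.logb 2 (Q p (c k)) - Real.logb 2 (Q p (.node n c)))
              - (Real.logb 2 (Q q (c k)) - Real.logb 2 (Q q (.node n c)))) := by
      intro k
      rw [Real.logb_div (div_ne_zero (hA k).ne' hSA.ne') (div_ne_zero (hB k).ne' hSB.ne'),
        Real.logb_div (hA k).ne' hSA.ne', Real.logb_div (hB k).ne' hSB.ne']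
    rw [Finset.sum_congr rfl (fun k _ => hterm k)]
    have hterm2 : ∀ k : Fin n,
        Q p (c k) * Real.logb 2 (Q p (c k) / Q q (c k))
        = Q p (c k) * (Real.logb 2 (Q p (c k)) - Real.logb 2 (Q q (c k))) := by
      intro k
      rw [Real.logb_div (hA k).ne' (hB k).ne']
    rw [Finset.sum_congr rfl (fun k _ => hterm2 k)]
    rw [Real.logb_div hSA.ne' hSB.ne']
    have hred : ∀ k : Fin n,
        (Q p (.node n c) / 1) * ((Q p (c k) / Q p (.node n c)) *
            ((Real.logb 2 (Q p (c k)) - Real.logb 2 (Q p (.node n c)))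
              - (Real.logb 2 (Q q (c k)) - Real.logb 2 (Q q (.node n c)))))
        = Q p (c k) * ((Real.logb 2 (Q p (c k)) - Real.logb 2 (Q p (.node n c)))
              - (Real.logb 2 (Q q (c k)) - Real.logb 2 (Q q (.node n c)))) := by
      intro k
      field_simp
    rw [Finset.mul_sum, Finset.sum_congr rfl (fun k _ => hred k)]
    have hsum : Q p (.node n c) = ∑ k : Fin n, Q p (c k) := rfl
    rw [hsum]
    have hsplit : ∀ k : Fin n,
        Q p (c k) * ((Real.logb 2 (Q p (c k)) - Real.logb 2 (∑ j : Fin n, Q p (c j)))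
              - (Real.logb 2 (Q q (c k)) - Real.logb 2 (Q q (.node n c))))
        = Q p (c k) * (Real.logb 2 (Q p (c k)) - Real.logb 2 (Q q (c k)))
          - Q p (c k) * (Real.logb 2 (∑ j : Fin n, Q p (c j)) - Real.logb 2 (Q q (.node n c))) := by
      intro k; ring
    rw [Finset.sum_congr rfl (fun k _ => hsplit k), Finset.sum_sub_distrib, ← Finset.sum_mul]
    ring

/-- Normalized divergence formula:
`D(P_L ‖ P_{L'})/E[w(L)] = Σ_{j∈B} P_B(j) · D(P_{S_j} ‖ P_{S'_j})`. -/
theorem normalized_divergence_lemma {α : Type} (p q : α → ℝ) (t : PTree α)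
    (hp : pos p t) (hq : pos q t) (hQp : Q p t = 1) (hQq : Q q t = 1)
    (hW : 0 < leafExp p (fun addr => (addr.length : ℝ)) t []) :
    leafDiv p q t / leafExp p (fun addr => (addr.length : ℝ)) t []
      = branchDivNorm p q (leafExp p (fun addr => (addr.length : ℝ)) t []) t := by
  rw [branchDivNorm_div p q _ hW.ne' t, key_eq p q t hp hq, hQp, hQq]
  simp

end PTree
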